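/- Let A be an ε-differentially private randomized algorithm with domain 𝒳^n and finite range 𝒴, let 𝒫 be a distribution over 𝒳, and let S be a random dataset drawn from the product distribution 𝒫^n (n i.i.d. samples). Then for any β > 0, the β-approximate max-information satisfies I_∞^β(S; A(S)) ≤ (log e) · ( ε² n / 2 + ε √( n ln(2/β) / 2 ) ). -/

import Mathlib

open scoped ENNReal

/-- Probability of an event under a PMF. -/
noncomputable def pr {Z : Type*} (p : PMF Z) (O : Set Z) : ℝ≥0∞ :=
  p.toOuterMeasure O

/-- Product of two independent PMFs. -/
noncomputable def pmfPair {A B : Type*} (p : PMF A) (q : PMF B) : PMF (A × B) :=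
  p.bind fun a => q.map fun b => (a, b)

/-- Joint distribution of (input, output). -/
noncomputable def joint {A B : Type*} (μ : PMF A) (f : A → PMF B) : PMF (A × B) :=
  μ.bind fun a => (f a).map fun b => (a, b)

/-- Product of the marginals of input and output. -/
noncomputable def indepProd {A B : Type*} (μ : PMF A) (f : A → PMF B) : PMF (A × B) :=
  pmfPair μ (μ.bind f)

/-- `D_∞^δ(p ‖ q) ≤ k` (δ-approximate max-divergence, log base 2). -/
def approxDivLe {Z : Type*} (p q : PMF Z) (δ k : ℝ) : Prop :=
  ∀ O : Set Z, ENNReal.ofReal δ < pr p O →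
    pr p O - ENNReal.ofReal δ ≤ (2 : ℝ≥0∞) ^ k * pr q O

/-- `I_∞^β(S; f(S)) ≤ k` for `S ∼ μ`. -/
def approxMaxInfoLe {A B : Type*} (μ : PMF A) (f : A → PMF B) (β k : ℝ) : Prop :=
  approxDivLe (joint μ f) (indepProd μ f) β k

/-- Two datasets are adjacent if they differ in a single element. -/
def Adjacent {X : Type*} {n : ℕ} (S S' : Fin n → X) : Prop :=
  ∃ i : Fin n, ∀ j : Fin n, j ≠ i → S j = S' j

/-- ε-differential privacy: for all adjacent datasets `S, S'` and every output `y`,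
`Pr[A(S) = y] ≤ e^ε · Pr[A(S') = y]`. -/
def DiffPrivate {X Y : Type*} {n : ℕ} (A : (Fin n → X) → PMF Y) (ε : ℝ) : Prop :=
  ∀ S S' : Fin n → X, Adjacent S S' → ∀ y : Y,
    A S y ≤ ENNReal.ofReal (Real.exp ε) * A S' y

/-- The distribution of `n` i.i.d. samples from `P`. -/
noncomputable def iid {X : Type*} (P : PMF X) : (n : ℕ) → PMF (Fin n → X)
  | 0 => PMF.pure fun i => i.elim0
  | n + 1 => (iid P n).bind fun S => P.map fun x => Fin.cons x S

open Real

namespace DPmi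

/-- key one-variable inequality for Hoeffding's lemma -/
lemma key_ineq {p : ℝ} (hp0 : 0 ≤ p) (hp1 : p ≤ 1) (u : ℝ) :
    (1 - p) * Real.exp (-p * u) + p * Real.exp ((1 - p) * u) ≤ Real.exp (u ^ 2 / 8) := by
  have hD : ∀ v : ℝ, 0 < 1 - p + p * Real.exp v := by
    intro v
    rcases eq_or_lt_of_le hp0 with h | h
    · simpa [← h] using one_pos
    · have := Real.exp_pos v
      nlinarith
  set D : ℝ → ℝ := fun v => 1 - p + p * Real.exp v with hDdef
  set F : ℝ → ℝ := fun v => p * Real.exp v / D v with hFdef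
  have hDD : ∀ v : ℝ, HasDerivAt D (p * Real.exp v) v := by
    intro v
    exact ((Real.hasDerivAt_exp v).const_mul p).const_add (1 - p)
  have hF01 : ∀ v, 0 ≤ F v ∧ F v ≤ 1 := by
    intro v
    constructor
    · exact div_nonneg (by positivity) (hD v).le
    · rw [hFdef, div_le_one (hD v)]
      show p * Real.exp v ≤ 1 - p + p * Real.exp v
      nlinarith [Real.exp_pos v]
  have hFD : ∀ v : ℝ, HasDerivAt F (F v * (1 - F v)) v := by
    intro v
    have h := (((Real.hasDerivAt_exp v).const_mul p)).div (hDD v) (hD v).ne'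
    refine h.congr_deriv (Eq.symm ?_)
    have hDv := (hD v).ne'
    simp only [hFdef]
    have hDv' : D v ≠ 0 := (hD v).ne'
    field_simp
  set G : ℝ → ℝ := fun v => v / 4 + p - F v with hGdef
  have hGD : ∀ v : ℝ, HasDerivAt G (1 / 4 - F v * (1 - F v)) v := by
    intro v
    exact (((hasDerivAt_id v).div_const 4).add_const p).sub (hFD v)
  have hGmono : Monotone G := by
    apply monotone_of_deriv_nonneg (fun v => (hGD v).differentiableAt)
    intro v
    rw [(hGD v).deriv]
    nlinarith [sq_nonneg (F v - 1 / 2)]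
  have hG0 : G 0 = 0 := by
    simp [hGdef, hFdef, hDdef]
  set g : ℝ → ℝ := fun v => v ^ 2 / 8 + p * v - Real.log (D v) with hgdef
  have hgD : ∀ v : ℝ, HasDerivAt g (G v) v := by
    intro v
    have h1 : HasDerivAt (fun v : ℝ => v ^ 2 / 8 + p * v) (2 * v ^ 1 / 8 + p * 1) v :=
      ((hasDerivAt_pow 2 v).div_const 8).add ((hasDerivAt_id v).const_mul p)
    have h2 : HasDerivAt (fun v => Real.log (D v)) (p * Real.exp v / D v) v :=
      (hDD v).log (hD v).ne'
    have := h1.sub h2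
    refine this.congr_deriv (Eq.symm ?_)
    simp only [hGdef, hFdef]
    ring
  have hgnonneg : ∀ v, 0 ≤ g v := by
    have hg0 : g 0 = 0 := by simp [hgdef, hDdef]
    have hdiff : Differentiable ℝ g := fun v => (hgD v).differentiableAt
    intro v
    rcases le_total 0 v with h | h
    · have hmono : MonotoneOn g (Set.Ici 0) := by
        apply monotoneOn_of_deriv_nonneg (convex_Ici 0) hdiff.continuous.continuousOn
          hdiff.differentiableOn
        intro x hx
        rw [(hgD x).deriv]
        rw [interior_Ici] at hx
        calc (0 : ℝ) = G 0 := hG0.symm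
          _ ≤ G x := hGmono (le_of_lt hx)
      have := hmono (Set.self_mem_Ici) (Set.mem_Ici.2 h) h
      rwa [hg0] at this
    · have hanti : AntitoneOn g (Set.Iic 0) := by
        apply antitoneOn_of_deriv_nonpos (convex_Iic 0) hdiff.continuous.continuousOn
          hdiff.differentiableOn
        intro x hx
        rw [(hgD x).deriv]
        rw [interior_Iic] at hx
        calc G x ≤ G 0 := hGmono (le_of_lt hx)
          _ = 0 := hG0
      have := hanti (Set.mem_Iic.2 h) (Set.self_mem_Iic) h
      rwa [hg0] at this
  -- conclude
  have hkey := hgnonneg u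
  have hlog : Real.log (D u) ≤ u ^ 2 / 8 + p * u := by
    simp only [hgdef] at hkey; linarith
  have hDle : D u ≤ Real.exp (u ^ 2 / 8 + p * u) := by
    have h1 : D u = Real.exp (Real.log (D u)) := (Real.exp_log (hD u)).symm
    rw [h1]
    exact Real.exp_le_exp.2 hlog
  have hrw : (1 - p) * Real.exp (-p * u) + p * Real.exp ((1 - p) * u)
      = Real.exp (-p * u) * D u := by
    simp only [hDdef]
    have : Real.exp ((1 - p) * u) = Real.exp u * Real.exp (-p * u) := by
      rw [← Real.exp_add]; ring_nf
    rw [this]; ring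
  rw [hrw]
  calc Real.exp (-p * u) * D u ≤ Real.exp (-p * u) * Real.exp (u ^ 2 / 8 + p * u) := by
        exact mul_le_mul_of_nonneg_left hDle (Real.exp_pos _).le
    _ = Real.exp (u ^ 2 / 8) := by rw [← Real.exp_add]; ring_nf


/-- Finite weighted Hoeffding lemma. -/
lemma hoeffding_fin {α : Type*} [Fintype α] (w V : α → ℝ) (a d lam : ℝ)
    (hw : ∀ x, 0 ≤ w x) (hw1 : ∑ x, w x = 1) (hd : 0 ≤ d)
    (hV1 : ∀ x, a ≤ V x) (hV2 : ∀ x, V x ≤ a + d) :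
    ∑ x, w x * Real.exp (lam * V x)
      ≤ Real.exp (lam * (∑ x, w x * V x) + lam ^ 2 * d ^ 2 / 8) := by
  set m := ∑ x, w x * V x with hm
  have hma : a ≤ m := by
    calc a = ∑ x, w x * a := by rw [← Finset.sum_mul, hw1, one_mul]
      _ ≤ m := Finset.sum_le_sum fun x _ => mul_le_mul_of_nonneg_left (hV1 x) (hw x)
  have hmb : m ≤ a + d := by
    calc m ≤ ∑ x, w x * (a + d) := Finset.sum_le_sum fun x _ =>
          mul_le_mul_of_nonneg_left (hV2 x) (hw x)
      _ = a + d := by rw [← Finset.sum_mul, hw1, one_mul]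
  rcases eq_or_lt_of_le hd with hd0 | hd0
  · -- d = 0
    have hVa : ∀ x, V x = a := fun x => le_antisymm (by simpa [← hd0] using hV2 x) (hV1 x)
    have hmeq : m = a := by
      rw [hm]
      calc ∑ x, w x * V x = ∑ x, w x * a := by
            exact Finset.sum_congr rfl fun x _ => by rw [hVa x]
        _ = a := by rw [← Finset.sum_mul, hw1, one_mul]
    calc ∑ x, w x * Real.exp (lam * V x) = ∑ x, w x * Real.exp (lam * a) := by
          exact Finset.sum_congr rfl fun x _ => by rw [hVa x]
      _ = Real.exp (lam * a) := by rw [← Finset.sum_mul, hw1, one_mul]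
      _ ≤ _ := by
          rw [hmeq]
          exact Real.exp_le_exp.2 (by nlinarith [sq_nonneg (lam * d)])
  · -- d > 0
    set p := (m - a) / d with hp
    have hp0 : 0 ≤ p := div_nonneg (by linarith) hd
    have hp1 : p ≤ 1 := by rw [hp, div_le_one hd0]; linarith
    set E₁ := Real.exp (lam * a) with hE1
    set E₂ := Real.exp (lam * (a + d)) with hE2
    -- chord bound for exp
    have chord : ∀ x, Real.exp (lam * V x) ≤ E₁ + (V x - a) / d * (E₂ - E₁) := by
      intro x
      set θ := (V x - a) / d with hθ
      have hθ0 : 0 ≤ θ := div_nonneg (by linarith [hV1 x]) hd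
      have hθ1 : θ ≤ 1 := by rw [hθ, div_le_one hd0]; linarith [hV2 x]
      have harg : (1 - θ) * (lam * a) + θ * (lam * (a + d)) = lam * V x := by
        have h' : θ * d = V x - a := by rw [hθ]; field_simp
        linear_combination lam * h'
      have := convexOn_exp.2 (Set.mem_univ (lam * a)) (Set.mem_univ (lam * (a + d)))
        (by linarith : (0:ℝ) ≤ 1 - θ) hθ0 (by ring)
      simp only [smul_eq_mul] at this
      rw [harg] at this
      calc Real.exp (lam * V x) ≤ (1 - θ) * E₁ + θ * E₂ := this
        _ = E₁ + θ * (E₂ - E₁) := by ring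
    have hsum : ∑ x, w x * Real.exp (lam * V x)
        ≤ E₁ + (m - a) / d * (E₂ - E₁) := by
      calc ∑ x, w x * Real.exp (lam * V x)
          ≤ ∑ x, w x * (E₁ + (V x - a) / d * (E₂ - E₁)) :=
            Finset.sum_le_sum fun x _ => mul_le_mul_of_nonneg_left (chord x) (hw x)
        _ = (∑ x, w x) * (E₁ - a / d * (E₂ - E₁)) + (∑ x, w x * V x) * ((E₂ - E₁) / d) := by
            rw [Finset.sum_mul, Finset.sum_mul, ← Finset.sum_add_distrib]
            exact Finset.sum_congr rfl fun x _ => by field_simp; ring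
        _ = E₁ + (m - a) / d * (E₂ - E₁) := by rw [hw1, ← hm]; field_simp; ring
    have hfinal : E₁ + (m - a) / d * (E₂ - E₁)
        ≤ Real.exp (lam * m + lam ^ 2 * d ^ 2 / 8) := by
      have h1 : E₁ + (m - a) / d * (E₂ - E₁) = (1 - p) * E₁ + p * E₂ := by rw [hp]; ring
      have hE1' : E₁ = Real.exp (lam * m) * Real.exp (-p * (lam * d)) := by
        rw [hE1, ← Real.exp_add]
        congr 1
        rw [hp]
        field_simp
        ring
      have hE2' : E₂ = Real.exp (lam * m) * Real.exp ((1 - p) * (lam * d)) := by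
        rw [hE2, ← Real.exp_add]
        congr 1
        rw [hp]
        field_simp
        ring
      rw [h1, hE1', hE2']
      have hk := key_ineq hp0 hp1 (lam * d)
      calc (1 - p) * (Real.exp (lam * m) * Real.exp (-p * (lam * d)))
            + p * (Real.exp (lam * m) * Real.exp ((1 - p) * (lam * d)))
          = Real.exp (lam * m) * ((1 - p) * Real.exp (-p * (lam * d))
            + p * Real.exp ((1 - p) * (lam * d))) := by ring
        _ ≤ Real.exp (lam * m) * Real.exp ((lam * d) ^ 2 / 8) :=
            mul_le_mul_of_nonneg_left hk (Real.exp_pos _).le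
        _ = Real.exp (lam * m + lam ^ 2 * d ^ 2 / 8) := by
            rw [← Real.exp_add]; ring_nf
    exact hsum.trans hfinal

/-- `2 cosh x ≤ x sinh x + 2` for `0 ≤ x`. -/
lemma cosh_ineq {x : ℝ} (hx : 0 ≤ x) : 2 * Real.cosh x ≤ x * Real.sinh x + 2 := by
  set H : ℝ → ℝ := fun v => v * Real.cosh v - Real.sinh v with hHdef
  have hHD : ∀ v : ℝ, HasDerivAt H (v * Real.sinh v) v := by
    intro v
    have h1 : HasDerivAt (fun v : ℝ => v * Real.cosh v)
        (1 * Real.cosh v + v * Real.sinh v) v :=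
      (hasDerivAt_id v).mul (Real.hasDerivAt_cosh v)
    have := h1.sub (Real.hasDerivAt_sinh v)
    refine this.congr_deriv (Eq.symm ?_)
    ring
  have hHmono : Monotone H := by
    apply monotone_of_deriv_nonneg (fun v => (hHD v).differentiableAt)
    intro v
    rw [(hHD v).deriv]
    rcases le_total 0 v with h | h
    · exact mul_nonneg h (Real.sinh_nonneg_iff.2 h)
    · exact mul_nonneg_iff.2 (Or.inr ⟨h, Real.sinh_nonpos_iff.2 h⟩)
  have hH0 : H 0 = 0 := by simp [hHdef]
  set G : ℝ → ℝ := fun v => v * Real.sinh v + 2 - 2 * Real.cosh v with hGdef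
  have hGD : ∀ v : ℝ, HasDerivAt G (H v) v := by
    intro v
    have h1 : HasDerivAt (fun v : ℝ => v * Real.sinh v)
        (1 * Real.sinh v + v * Real.cosh v) v :=
      (hasDerivAt_id v).mul (Real.hasDerivAt_sinh v)
    have h2 : HasDerivAt (fun v : ℝ => 2 * Real.cosh v) (2 * Real.sinh v) v :=
      (Real.hasDerivAt_cosh v).const_mul 2
    have := (h1.add_const 2).sub h2
    refine this.congr_deriv (Eq.symm ?_)
    simp only [hHdef]
    ring
  have hGmono : MonotoneOn G (Set.Ici 0) := by
    apply monotoneOn_of_deriv_nonneg (convex_Ici 0)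
      (Differentiable.continuous (fun v => (hGD v).differentiableAt)).continuousOn
      (Differentiable.differentiableOn (fun v => (hGD v).differentiableAt))
    intro v hv
    rw [interior_Ici] at hv
    rw [(hGD v).deriv]
    calc (0:ℝ) = H 0 := hH0.symm
      _ ≤ H v := hHmono (le_of_lt hv)
  have hG0 : G 0 = 0 := by simp [hGdef]
  have := hGmono Set.self_mem_Ici (Set.mem_Ici.2 hx) hx
  rw [hG0] at this
  simp only [hGdef] at this
  linarith


/-- chord bound for the mean of `R log R`. -/
lemma mean_bound {α : Type*} [Fintype α] {ε : ℝ} (hε : 0 < ε) (w R : α → ℝ)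
    (hw : ∀ x, 0 ≤ w x) (hw1 : ∑ x, w x = 1)
    (hlo : ∀ x, Real.exp (-ε) ≤ R x) (hup : ∀ x, R x ≤ Real.exp ε)
    (hmean : ∑ x, w x * R x = 1) :
    ∑ x, w x * (R x * Real.log (R x)) ≤ ε ^ 2 / 2 := by
  set A := Real.exp (-ε) with hA
  set B := Real.exp ε with hB
  have hA0 : 0 < A := Real.exp_pos _
  have hB0 : 0 < B := Real.exp_pos _
  have hAB : A < B := Real.exp_lt_exp.2 (by linarith)
  have hABmul : A * B = 1 := by rw [hA, hB, ← Real.exp_add]; simp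
  have hlogA : Real.log A = -ε := Real.log_exp _
  have hlogB : Real.log B = ε := Real.log_exp _
  -- chord bound pointwise
  have chord : ∀ x, R x * Real.log (R x)
      ≤ A * Real.log A + (R x - A) / (B - A) * (B * Real.log B - A * Real.log A) := by
    intro x
    set θ := (R x - A) / (B - A) with hθ
    have hθ0 : 0 ≤ θ := div_nonneg (by linarith [hlo x]) (by linarith)
    have hθ1 : θ ≤ 1 := by rw [hθ, div_le_one (by linarith : (0:ℝ) < B - A)]; linarith [hup x]
    have harg : (1 - θ) * A + θ * B = R x := by
      have h' : θ * (B - A) = R x - A := by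
        rw [hθ]; exact div_mul_cancel₀ _ (by linarith : B - A ≠ 0)
      linear_combination h'
    have hcvx := Real.convexOn_mul_log.2 (Set.mem_Ici.2 hA0.le) (Set.mem_Ici.2 hB0.le)
      (by linarith : (0:ℝ) ≤ 1 - θ) hθ0 (by ring)
    simp only [smul_eq_mul] at hcvx
    rw [harg] at hcvx
    calc R x * Real.log (R x) ≤ (1 - θ) * (A * Real.log A) + θ * (B * Real.log B) := hcvx
      _ = A * Real.log A + θ * (B * Real.log B - A * Real.log A) := by ring
  have hsum : ∑ x, w x * (R x * Real.log (R x))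
      ≤ A * Real.log A + (1 - A) / (B - A) * (B * Real.log B - A * Real.log A) := by
    calc ∑ x, w x * (R x * Real.log (R x))
        ≤ ∑ x, w x * (A * Real.log A
            + (R x - A) / (B - A) * (B * Real.log B - A * Real.log A)) :=
          Finset.sum_le_sum fun x _ => mul_le_mul_of_nonneg_left (chord x) (hw x)
      _ = (∑ x, w x) * (A * Real.log A - A / (B - A) * (B * Real.log B - A * Real.log A))
          + (∑ x, w x * R x) * ((B * Real.log B - A * Real.log A) / (B - A)) := by
          rw [Finset.sum_mul, Finset.sum_mul, ← Finset.sum_add_distrib]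
          refine Finset.sum_congr rfl fun x _ => ?_
          have : B - A ≠ 0 := by linarith
          field_simp
          ring
      _ = A * Real.log A + (1 - A) / (B - A) * (B * Real.log B - A * Real.log A) := by
          rw [hw1, hmean]
          have : B - A ≠ 0 := by linarith
          field_simp
          ring
  refine hsum.trans ?_
  rw [hlogA, hlogB]
  -- goal: A * (-ε) + (1-A)/(B-A) * (B ε - A (-ε)) ≤ ε²/2
  have hchord1 : A * (-ε) + (1 - A) / (B - A) * (B * ε - A * (-ε)) = ε * (A + B - 2) / (B - A) := by
    have h1 : B - A ≠ 0 := by linarith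
    field_simp
    nlinarith [hABmul]
  rw [hchord1]
  rw [div_le_iff₀ (by linarith : (0:ℝ) < B - A)]
  -- ε (A + B - 2) ≤ ε²/2 (B - A);  A+B = 2 cosh ε, B - A = 2 sinh ε
  have hcosh : A + B = 2 * Real.cosh ε := by rw [Real.cosh_eq, hA, hB]; ring
  have hsinh : B - A = 2 * Real.sinh ε := by rw [Real.sinh_eq, hA, hB]; ring
  have := cosh_ineq hε.le
  rw [hcosh, hsinh]
  nlinarith [this, hε]

/-- Core per-step MGF bound. -/
lemma core {α : Type*} [Fintype α] {ε lam : ℝ} (hε : 0 < ε) (hlam : 0 ≤ lam)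
    (w R : α → ℝ) (hw : ∀ x, 0 ≤ w x) (hw1 : ∑ x, w x = 1)
    (hR : ∀ x, 0 ≤ R x) (hmean : ∑ x, w x * R x = 1)
    (hratio : ∀ x x', R x ≤ Real.exp ε * R x') :
    ∑ x, w x * R x * R x ^ lam ≤ Real.exp (lam * ε ^ 2 / 2 + lam ^ 2 * ε ^ 2 / 8) := by
  have hNE : Nonempty α := by
    by_contra h
    rw [not_nonempty_iff] at h
    rw [Finset.univ_eq_empty, Finset.sum_empty] at hw1
    norm_num at hw1
  -- pointwise bounds on R
  have hup : ∀ x, R x ≤ Real.exp ε := by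
    intro x
    have h1 : Real.exp (-ε) * R x = ∑ x', w x' * (Real.exp (-ε) * R x) := by
      rw [← Finset.sum_mul, hw1, one_mul]
    have h2 : ∑ x', w x' * (Real.exp (-ε) * R x) ≤ ∑ x', w x' * R x' := by
      refine Finset.sum_le_sum fun x' _ => mul_le_mul_of_nonneg_left ?_ (hw x')
      have := hratio x x'
      rw [Real.exp_neg]
      rw [inv_mul_le_iff₀ (Real.exp_pos ε)]
      linarith
    have h3 : Real.exp (-ε) * R x ≤ 1 := by rw [h1, ← hmean]; exact h2
    rw [Real.exp_neg, inv_mul_le_iff₀ (Real.exp_pos ε)] at h3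
    simpa using h3
  have hlo : ∀ x, Real.exp (-ε) ≤ R x := by
    intro x
    have h2 : ∑ x', w x' * R x' ≤ ∑ x', w x' * (Real.exp ε * R x) :=
      Finset.sum_le_sum fun x' _ => mul_le_mul_of_nonneg_left (hratio x' x) (hw x')
    have h1 : ∑ x', w x' * (Real.exp ε * R x) = Real.exp ε * R x := by
      rw [← Finset.sum_mul, hw1, one_mul]
    rw [hmean, h1] at h2
    rw [Real.exp_neg, inv_le_iff_one_le_mul₀ (Real.exp_pos ε)]
    · linarith
  have hRpos : ∀ x, 0 < R x := fun x => lt_of_lt_of_le (Real.exp_pos _) (hlo x)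
  -- tilted weights
  set wt : α → ℝ := fun x => w x * R x with hwt
  have hwt0 : ∀ x, 0 ≤ wt x := fun x => mul_nonneg (hw x) (hR x)
  set W : α → ℝ := fun x => Real.log (R x) with hW
  -- min of W
  obtain ⟨x₀, -, hx₀⟩ := Finset.exists_min_image Finset.univ R (Finset.univ_nonempty)
  have hW1 : ∀ x, W x₀ ≤ W x := fun x =>
    Real.log_le_log (hRpos x₀) (hx₀ x (Finset.mem_univ x))
  have hW2 : ∀ x, W x ≤ W x₀ + ε := by
    intro x
    have h1 : R x ≤ Real.exp ε * R x₀ := hratio x x₀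
    calc W x ≤ Real.log (Real.exp ε * R x₀) := Real.log_le_log (hRpos x) h1
      _ = W x₀ + ε := by rw [Real.log_mul (Real.exp_pos ε).ne' (hRpos x₀).ne', Real.log_exp]; ring
  -- mean bound
  have hmb : ∑ x, wt x * W x ≤ ε ^ 2 / 2 := by
    have := mean_bound hε w R hw hw1 hlo hup hmean
    calc ∑ x, wt x * W x = ∑ x, w x * (R x * Real.log (R x)) := by
          refine Finset.sum_congr rfl fun x _ => ?_
          simp only [hwt, hW]
          ring
      _ ≤ ε ^ 2 / 2 := this
  -- hoeffding
  have hhoef := hoeffding_fin wt W (W x₀) ε lam hwt0 hmean hε.le hW1 (fun x => hW2 x)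
  calc ∑ x, w x * R x * R x ^ lam = ∑ x, wt x * Real.exp (lam * W x) := by
        refine Finset.sum_congr rfl fun x _ => ?_
        rw [Real.rpow_def_of_pos (hRpos x)]
        simp only [hwt, hW]
        ring_nf
    _ ≤ Real.exp (lam * (∑ x, wt x * W x) + lam ^ 2 * ε ^ 2 / 8) := hhoef
    _ ≤ Real.exp (lam * ε ^ 2 / 2 + lam ^ 2 * ε ^ 2 / 8) := by
        apply Real.exp_le_exp.2
        have : lam * (∑ x, wt x * W x) ≤ lam * (ε ^ 2 / 2) :=
          mul_le_mul_of_nonneg_left hmb hlam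
        linarith


noncomputable def pR {α : Type*} (p : PMF α) (a : α) : ℝ := (p a).toReal

lemma pR_nonneg {α : Type*} (p : PMF α) (a : α) : 0 ≤ pR p a := ENNReal.toReal_nonneg

lemma sum_pR {α : Type*} [Fintype α] (p : PMF α) : ∑ a, pR p a = 1 := by
  have h := p.tsum_coe
  rw [tsum_fintype] at h
  have := ENNReal.toReal_sum (s := Finset.univ) (f := fun a => p a)
    (fun a _ => p.apply_ne_top a)
  rw [h] at this
  simpa [pR] using this.symm

lemma bindR {α β : Type*} [Fintype α] (p : PMF α) (g : α → PMF β) (b : β) :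
    pR (p.bind g) b = ∑ a, pR p a * pR (g a) b := by
  rw [pR, PMF.bind_apply, tsum_fintype]
  rw [ENNReal.toReal_sum (fun a _ => ENNReal.mul_ne_top (p.apply_ne_top a) ((g a).apply_ne_top b))]
  exact Finset.sum_congr rfl fun a _ => ENNReal.toReal_mul

lemma dp_real {X Y : Type*} {n : ℕ} {A : (Fin n → X) → PMF Y} {ε : ℝ}
    (hA : DiffPrivate A ε) {S S' : Fin n → X} (h : Adjacent S S') (y : Y) :
    pR (A S) y ≤ Real.exp ε * pR (A S') y := by
  have h1 := hA S S' h y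
  have h2 : ((ENNReal.ofReal (Real.exp ε)) * A S' y).toReal
      = Real.exp ε * pR (A S') y := by
    rw [ENNReal.toReal_mul, ENNReal.toReal_ofReal (Real.exp_pos ε).le]; rfl
  rw [pR, ← h2]
  exact ENNReal.toReal_mono (ENNReal.mul_ne_top ENNReal.ofReal_ne_top ((A S').apply_ne_top y)) h1

lemma adjacent_cons {X : Type*} {n : ℕ} {s s' : Fin n → X} (x : X) (h : Adjacent s s') :
    Adjacent (Fin.cons x s : Fin (n+1) → X) (Fin.cons x s') := by
  obtain ⟨i, hi⟩ := h
  refine ⟨i.succ, fun j => ?_⟩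
  induction j using Fin.cases with
  | zero => intro _; simp
  | succ k =>
    intro hk
    simp only [Fin.cons_succ]
    exact hi k (fun h => hk (by rw [h]))

lemma adjacent_cons' {X : Type*} {n : ℕ} (s : Fin n → X) (x x' : X) :
    Adjacent (Fin.cons x s : Fin (n+1) → X) (Fin.cons x' s) := by
  refine ⟨0, fun j => ?_⟩
  induction j using Fin.cases with
  | zero => intro h; exact absurd rfl h
  | succ k => intro _; simp

lemma iid_succ {X : Type*} [Fintype X] (P : PMF X) (n : ℕ) (x : X) (s : Fin n → X) :
    (iid P (n+1)) (Fin.cons x s) = P x * (iid P n) s := by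
  classical
  rw [show iid P (n+1) = (iid P n).bind fun S => P.map fun x => (Fin.cons x S : Fin (n+1) → X) from rfl]
  rw [PMF.bind_apply, tsum_fintype]
  rw [Finset.sum_eq_single s]
  · rw [PMF.map_apply, tsum_fintype]
    rw [Finset.sum_eq_single x]
    · rw [if_pos rfl]; ring
    · intro b _ hb
      apply if_neg
      intro hc
      have h0 := congrFun hc 0
      simp at h0
      exact hb h0.symm
    · intro hx; exact absurd (Finset.mem_univ x) hx
  · intro S _ hS
    rw [PMF.map_apply, tsum_fintype]
    refine mul_eq_zero_of_right _ (Finset.sum_eq_zero fun b _ => ?_)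
    apply if_neg
    intro hc
    have ht : Fin.tail (Fin.cons x s : Fin (n+1) → X)
        = Fin.tail (Fin.cons b S : Fin (n+1) → X) := by rw [hc]
    simp [Fin.tail_cons] at ht
    exact hS ht.symm
  · intro h; exact absurd (Finset.mem_univ s) h

lemma sum_cons_reindex {X : Type*} [Fintype X] {n : ℕ} (h : (Fin (n+1) → X) → ℝ) :
    ∑ s : Fin (n+1) → X, h s = ∑ x : X, ∑ s : Fin n → X, h (Fin.cons x s) := by
  have hbij : Function.Bijective
      (fun p : X × (Fin n → X) => (Fin.cons p.1 p.2 : Fin (n+1) → X)) := by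
    constructor
    · rintro ⟨x, s⟩ ⟨x', s'⟩ hcontra
      simp only at hcontra
      have h0 := congrFun hcontra 0
      simp at h0
      have ht : Fin.tail (Fin.cons x s : Fin (n+1) → X)
          = Fin.tail (Fin.cons x' s' : Fin (n+1) → X) := by rw [hcontra]
      simp [Fin.tail_cons] at ht
      simp [h0, ht]
    · intro s
      exact ⟨((s 0 : X), (Fin.tail s : Fin n → X)), Fin.cons_self_tail s⟩
  calc ∑ s : Fin (n+1) → X, h s
      = ∑ p : X × (Fin n → X), h (Fin.cons p.1 p.2) :=
        (Fintype.sum_bijective _ hbij _ _ (fun p => rfl)).symm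
    _ = ∑ x : X, ∑ s : Fin n → X, h (Fin.cons x s) :=
        Fintype.sum_prod_type (f := fun p : X × (Fin n → X) => h (Fin.cons p.1 p.2))


/-- Per-step bound. -/
lemma step_bound {α : Type*} [Fintype α] {ε lam : ℝ} (hε : 0 < ε) (hlam : 0 ≤ lam)
    (w f : α → ℝ) (hw : ∀ x, 0 ≤ w x) (hw1 : ∑ x, w x = 1)
    (hf : ∀ x, 0 ≤ f x) (hDP : ∀ x x', f x ≤ Real.exp ε * f x')
    (q : ℝ) (hq : 0 ≤ q) :
    ∑ x, w x * f x * (f x / q) ^ lam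
      ≤ Real.exp (lam * ε ^ 2 / 2 + lam ^ 2 * ε ^ 2 / 8)
        * ((∑ x, w x * f x) * ((∑ x, w x * f x) / q) ^ lam) := by
  set abar := ∑ x, w x * f x with habar
  have habar0 : 0 ≤ abar := Finset.sum_nonneg fun x _ => mul_nonneg (hw x) (hf x)
  rcases eq_or_lt_of_le habar0 with h0 | hpos
  · -- abar = 0, so each w x * f x = 0
    have hz : ∀ x ∈ Finset.univ, w x * f x = 0 := by
      intro x hx
      exact (Finset.sum_eq_zero_iff_of_nonneg
        (fun x _ => mul_nonneg (hw x) (hf x))).1 h0.symm x hx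
    have : ∀ x ∈ Finset.univ, w x * f x * (f x / q) ^ lam = 0 := by
      intro x hx
      rw [hz x hx, zero_mul]
    rw [Finset.sum_eq_zero this, ← h0]
    simp
  · -- abar > 0
    set R : α → ℝ := fun x => f x / abar with hR
    have hRnn : ∀ x, 0 ≤ R x := fun x => div_nonneg (hf x) habar0
    have hmean : ∑ x, w x * R x = 1 := by
      rw [hR]
      have : ∑ x, w x * (f x / abar) = (∑ x, w x * f x) / abar := by
        rw [Finset.sum_div]
        exact Finset.sum_congr rfl fun x _ => by ring
      rw [this, ← habar, div_self hpos.ne']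
    have hratio : ∀ x x', R x ≤ Real.exp ε * R x' := by
      intro x x'
      rw [hR]
      rw [div_le_iff₀ hpos]
      calc f x ≤ Real.exp ε * f x' := hDP x x'
        _ = Real.exp ε * (f x' / abar) * abar := by field_simp
    have hcore := core hε hlam w R hw hw1 hRnn hmean hratio
    have key : ∀ x, w x * f x * (f x / q) ^ lam
        = abar * (abar / q) ^ lam * (w x * R x * R x ^ lam) := by
      intro x
      have hfx : f x = R x * abar := by rw [hR]; field_simp
      have hdiv : f x / q = R x * (abar / q) := by rw [hfx]; ring
      rw [hdiv, Real.mul_rpow (hRnn x) (div_nonneg habar0 hq), hfx]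
      ring
    calc ∑ x, w x * f x * (f x / q) ^ lam
        = abar * (abar / q) ^ lam * ∑ x, w x * R x * R x ^ lam := by
          rw [Finset.mul_sum]
          exact Finset.sum_congr rfl fun x _ => key x
      _ ≤ abar * (abar / q) ^ lam * Real.exp (lam * ε ^ 2 / 2 + lam ^ 2 * ε ^ 2 / 8) := by
          apply mul_le_mul_of_nonneg_left hcore
          exact mul_nonneg habar0 (Real.rpow_nonneg (div_nonneg habar0 hq) lam)
      _ = Real.exp (lam * ε ^ 2 / 2 + lam ^ 2 * ε ^ 2 / 8) * (abar * (abar / q) ^ lam) := by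
          ring

/-- Main MGF bound, by induction on n. -/
lemma mgf_bound {X Y : Type*} [Fintype X] [Fintype Y] (P : PMF X) {ε lam : ℝ}
    (hε : 0 < ε) (hlam : 0 ≤ lam) :
    ∀ (n : ℕ) (A : (Fin n → X) → PMF Y), DiffPrivate A ε →
    ∑ y : Y, ∑ s : Fin n → X, pR (iid P n) s * pR (A s) y
        * (pR (A s) y / pR ((iid P n).bind A) y) ^ lam
      ≤ Real.exp (n * (lam * ε ^ 2 / 2 + lam ^ 2 * ε ^ 2 / 8)) := by
  intro n
  induction n with
  | zero =>
    intro A hA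
    have huniq : ∀ s : Fin 0 → X, s = (fun i => i.elim0) := fun s => Subsingleton.elim _ _
    have hpure : iid P 0 = PMF.pure (fun i => i.elim0) := rfl
    have hbind : (iid P 0).bind A = A (fun i => i.elim0) := by rw [hpure, PMF.pure_bind]
    simp only [Nat.cast_zero, zero_mul, Real.exp_zero]
    have hsum : ∀ y : Y, ∑ s : Fin 0 → X, pR (iid P 0) s * pR (A s) y
        * (pR (A s) y / pR ((iid P 0).bind A) y) ^ lam
        = pR (A (fun i => i.elim0)) y
          * (pR (A (fun i => i.elim0)) y / pR (A (fun i => i.elim0)) y) ^ lam := by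
      intro y
      rw [Finset.sum_eq_single (fun (i : Fin 0) => i.elim0)]
      · rw [hbind, hpure]
        simp [pR, PMF.pure_apply]
      · intro s _ hs; exact absurd (huniq s) hs
      · intro h; exact absurd (Finset.mem_univ _) h
    calc ∑ y : Y, ∑ s : Fin 0 → X, pR (iid P 0) s * pR (A s) y
          * (pR (A s) y / pR ((iid P 0).bind A) y) ^ lam
        = ∑ y : Y, pR (A (fun i => i.elim0)) y
          * (pR (A (fun i => i.elim0)) y / pR (A (fun i => i.elim0)) y) ^ lam :=
          Finset.sum_congr rfl fun y _ => hsum y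
      _ ≤ ∑ y : Y, pR (A (fun i => i.elim0)) y := by
          apply Finset.sum_le_sum
          intro y _
          set t := pR (A (fun i => i.elim0)) y with ht
          have ht0 : 0 ≤ t := pR_nonneg _ _
          rcases eq_or_lt_of_le ht0 with h | h
          · rw [← h]; simp
          · rw [div_self h.ne', Real.one_rpow, mul_one]
      _ = 1 := sum_pR _
      _ ≤ 1 := le_refl 1
  | succ n ih =>
    intro A hA
    set A' : (Fin n → X) → PMF Y := fun s' => P.bind (fun x => A (Fin.cons x s')) with hA'def
    have hA'dp : DiffPrivate A' ε := by
      intro s s' hadj y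
      rw [hA'def]
      simp only [PMF.bind_apply]
      rw [← ENNReal.tsum_mul_left]
      apply ENNReal.tsum_le_tsum
      intro x
      rw [← mul_assoc, mul_comm (ENNReal.ofReal (Real.exp ε)) (P x), mul_assoc]
      exact mul_le_mul_right (hA (Fin.cons x s) (Fin.cons x s') (adjacent_cons x hadj) y) (P x)
    -- marginal equality
    have hmarg : ∀ y : Y, pR ((iid P (n+1)).bind A) y = pR ((iid P n).bind A') y := by
      intro y
      rw [bindR, bindR]
      rw [sum_cons_reindex (fun s => pR (iid P (n+1)) s * pR (A s) y)]
      rw [Finset.sum_comm]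
      apply Finset.sum_congr rfl
      intro s' _
      have : pR (A' s') y = ∑ x, pR P x * pR (A (Fin.cons x s')) y := by
        rw [hA'def]; exact bindR P _ y
      rw [this, Finset.mul_sum]
      apply Finset.sum_congr rfl
      intro x _
      have : pR (iid P (n+1)) (Fin.cons x s') = pR P x * pR (iid P n) s' := by
        rw [pR, pR, pR, iid_succ, ENNReal.toReal_mul]
      rw [this]
      ring
    set Q : Y → ℝ := fun y => pR ((iid P (n+1)).bind A) y with hQ
    have hQ0 : ∀ y, 0 ≤ Q y := fun y => pR_nonneg _ _
    have hstep : ∀ y : Y, ∀ s' : Fin n → X,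
        ∑ x, pR P x * pR (A (Fin.cons x s')) y * (pR (A (Fin.cons x s')) y / Q y) ^ lam
          ≤ Real.exp (lam * ε ^ 2 / 2 + lam ^ 2 * ε ^ 2 / 8)
            * (pR (A' s') y * (pR (A' s') y / Q y) ^ lam) := by
      intro y s'
      have hA'y : pR (A' s') y = ∑ x, pR P x * pR (A (Fin.cons x s')) y := by
        rw [hA'def]; exact bindR P _ y
      rw [hA'y]
      exact step_bound hε hlam (fun x => pR P x) (fun x => pR (A (Fin.cons x s')) y)
        (fun x => pR_nonneg _ _) (sum_pR P) (fun x => pR_nonneg _ _)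
        (fun x x' => dp_real hA (adjacent_cons' s' x x') y) (Q y) (hQ0 y)
    calc ∑ y : Y, ∑ s : Fin (n+1) → X, pR (iid P (n+1)) s * pR (A s) y
          * (pR (A s) y / pR ((iid P (n+1)).bind A) y) ^ lam
        = ∑ y : Y, ∑ s' : Fin n → X, pR (iid P n) s' *
            ∑ x, pR P x * pR (A (Fin.cons x s')) y * (pR (A (Fin.cons x s')) y / Q y) ^ lam := by
          apply Finset.sum_congr rfl
          intro y _
          rw [sum_cons_reindex (fun s => pR (iid P (n+1)) s * pR (A s) y
            * (pR (A s) y / pR ((iid P (n+1)).bind A) y) ^ lam)]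
          rw [Finset.sum_comm]
          apply Finset.sum_congr rfl
          intro s' _
          rw [Finset.mul_sum]
          apply Finset.sum_congr rfl
          intro x _
          have : pR (iid P (n+1)) (Fin.cons x s') = pR P x * pR (iid P n) s' := by
            rw [pR, pR, pR, iid_succ, ENNReal.toReal_mul]
          rw [this]
          ring
      _ ≤ ∑ y : Y, ∑ s' : Fin n → X, pR (iid P n) s' *
            (Real.exp (lam * ε ^ 2 / 2 + lam ^ 2 * ε ^ 2 / 8)
              * (pR (A' s') y * (pR (A' s') y / Q y) ^ lam)) := by
          apply Finset.sum_le_sum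
          intro y _
          apply Finset.sum_le_sum
          intro s' _
          exact mul_le_mul_of_nonneg_left (hstep y s') (pR_nonneg _ _)
      _ = Real.exp (lam * ε ^ 2 / 2 + lam ^ 2 * ε ^ 2 / 8)
            * ∑ y : Y, ∑ s' : Fin n → X, pR (iid P n) s' * pR (A' s') y
              * (pR (A' s') y / pR ((iid P n).bind A') y) ^ lam := by
          rw [Finset.mul_sum]
          apply Finset.sum_congr rfl
          intro y _
          rw [Finset.mul_sum]
          apply Finset.sum_congr rfl
          intro s' _
          simp only [hQ]
          rw [hmarg y]
          ring
      _ ≤ Real.exp (lam * ε ^ 2 / 2 + lam ^ 2 * ε ^ 2 / 8)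
            * Real.exp (n * (lam * ε ^ 2 / 2 + lam ^ 2 * ε ^ 2 / 8)) := by
          apply mul_le_mul_of_nonneg_left (ih A' hA'dp) (Real.exp_pos _).le
      _ = Real.exp ((n + 1 : ℕ) * (lam * ε ^ 2 / 2 + lam ^ 2 * ε ^ 2 / 8)) := by
          rw [← Real.exp_add]
          congr 1
          push_cast
          ring


lemma bind_map_pair_apply {A B : Type*} [Fintype A] [Fintype B]
    (p : PMF A) (f : A → PMF B) (a : A) (b : B) :
    (p.bind fun a' => (f a').map fun b' => (a', b')) (a, b) = p a * f a b := by
  classical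
  rw [PMF.bind_apply, tsum_fintype]
  rw [Finset.sum_eq_single a]
  · rw [PMF.map_apply, tsum_fintype]
    rw [Finset.sum_eq_single b]
    · rw [if_pos rfl]
    · intro b' _ hb'
      apply if_neg
      intro hc
      exact hb' (congrArg Prod.snd hc).symm
    · intro hb; exact absurd (Finset.mem_univ b) hb
  · intro a' _ ha'
    rw [PMF.map_apply, tsum_fintype]
    refine mul_eq_zero_of_right _ (Finset.sum_eq_zero fun b' _ => ?_)
    apply if_neg
    intro hc
    exact ha' (congrArg Prod.fst hc).symm
  · intro ha; exact absurd (Finset.mem_univ a) ha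

lemma joint_apply {A B : Type*} [Fintype A] [Fintype B]
    (μ : PMF A) (f : A → PMF B) (a : A) (b : B) :
    joint μ f (a, b) = μ a * f a b := bind_map_pair_apply μ f a b

lemma indep_apply {A B : Type*} [Fintype A] [Fintype B]
    (μ : PMF A) (f : A → PMF B) (a : A) (b : B) :
    indepProd μ f (a, b) = μ a * (μ.bind f) b :=
  bind_map_pair_apply μ (fun _ => μ.bind f) a b

lemma pr_eq_sum {Z : Type*} [Fintype Z] (p : PMF Z) (O : Set Z) :
    pr p O = ∑ z : Z, Set.indicator O (fun z => p z) z := by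
  rw [pr, PMF.toOuterMeasure_apply, tsum_fintype]

lemma pr_le_one {Z : Type*} [Fintype Z] (p : PMF Z) (O : Set Z) :
    pr p O ≤ 1 := by
  rw [pr_eq_sum]
  calc ∑ z : Z, Set.indicator O (fun z => p z) z ≤ ∑ z : Z, p z :=
        Finset.sum_le_sum fun z _ => Set.indicator_le_self O _ z
    _ = 1 := by rw [← p.tsum_coe, tsum_fintype]

/-- If the mechanism is constant, joint = indepProd. -/
lemma joint_eq_indep_of_const {A B : Type*} (μ : PMF A) (f : A → PMF B)
    (hconst : ∀ a a', f a = f a') : joint μ f = indepProd μ f := by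
  rcases isEmpty_or_nonempty A with hA | hA
  · apply PMF.ext
    intro z
    rw [joint, indepProd, pmfPair, PMF.bind_apply, PMF.bind_apply]
    apply tsum_congr
    intro a
    exact (hA.false a).elim
  · obtain ⟨a₀⟩ := hA
    have hf : f = fun _ => f a₀ := funext fun a => hconst a a₀
    rw [joint, indepProd, pmfPair]
    have hbind : μ.bind f = f a₀ := by rw [hf]; exact PMF.bind_const μ (f a₀)
    rw [hbind]
    congr 1
    funext a
    rw [hf]

/-- With ε = 0, a DP mechanism is constant. -/
lemma dp_zero_const {X Y : Type*} {n : ℕ} {A : (Fin n → X) → PMF Y}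
    (hA : DiffPrivate A 0) (S S' : Fin n → X) : A S = A S' := by
  have hadj : ∀ T T' : Fin n → X, Adjacent T T' → A T = A T' := by
    intro T T' h
    have hsymm : Adjacent T' T := by
      obtain ⟨i, hi⟩ := h
      exact ⟨i, fun j hj => (hi j hj).symm⟩
    apply PMF.ext
    intro y
    have h1 := hA T T' h y
    have h2 := hA T' T hsymm y
    rw [Real.exp_zero, ENNReal.ofReal_one, one_mul] at h1 h2
    exact le_antisymm h1 h2
  have claim : ∀ m : ℕ, ∀ T T' : Fin n → X, (∀ j : Fin n, m ≤ (j : ℕ) → T j = T' j)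
      → A T = A T' := by
    intro m
    induction m with
    | zero => intro T T' h; rw [funext fun j => h j (Nat.zero_le _)]
    | succ m ih =>
      intro T T' h
      by_cases hm : m < n
      · set Tm : Fin n → X := fun j => if (j : ℕ) = m then T' j else T j with hTm
        have step1 : A T = A Tm := by
          apply hadj
          refine ⟨⟨m, hm⟩, fun j hj => ?_⟩
          have : (j : ℕ) ≠ m := fun hc => hj (Fin.ext hc)
          simp [hTm, this]
        have step2 : A Tm = A T' := by
          apply ih
          intro j hj
          rcases eq_or_lt_of_le hj with he | hlt
          · simp [hTm, ← he]
          · have : (j : ℕ) ≠ m := by omega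
            simp only [hTm, this, if_false]
            exact h j (by omega)
        rw [step1, step2]
      · apply ih
        intro j hj
        exact absurd hj (by have := j.isLt; omega)
  apply claim n
  intro j hj
  exact absurd (lt_of_lt_of_le j.isLt hj) (by omega)

/-- negative ε with n ≥ 1 is contradictory -/
lemma dp_neg_false {X Y : Type*} {n : ℕ} {A : (Fin n → X) → PMF Y} {ε : ℝ}
    (hA : DiffPrivate A ε) (hn : 0 < n) (hε : ε < 0) (x₀ : X) : False := by
  set S : Fin n → X := fun _ => x₀ with hS
  have hadj : Adjacent S S := ⟨⟨0, hn⟩, fun j _ => rfl⟩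
  obtain ⟨y, hy⟩ : ∃ y : Y, A S y ≠ 0 := by
    by_contra h
    push_neg at h
    have := (A S).tsum_coe
    rw [tsum_congr h] at this
    simp at this
  have h1 := hA S S hadj y
  have hlt : ENNReal.ofReal (Real.exp ε) * A S y < 1 * A S y := by
    apply ENNReal.mul_lt_mul_left hy ((A S).apply_ne_top y)
    rw [← ENNReal.ofReal_one]
    exact ENNReal.ofReal_lt_ofReal_iff_of_nonneg (Real.exp_pos ε).le |>.2
      (by rw [← Real.exp_zero]; exact Real.exp_lt_exp.2 hε)
  rw [one_mul] at hlt
  exact absurd h1 (not_le.2 hlt)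


/-- the arithmetic identity for the Chernoff exponent -/
lemma arith {ε L : ℝ} {n : ℕ} (hn : 0 < n) (hε : 0 < ε) (hL : 0 < L) :
    (n : ℝ) * ((2 * Real.sqrt (2 * L / n) / ε) * ε ^ 2 / 2
        + (2 * Real.sqrt (2 * L / n) / ε) ^ 2 * ε ^ 2 / 8)
      - (2 * Real.sqrt (2 * L / n) / ε) * (ε ^ 2 * n / 2 + ε * Real.sqrt (n * L / 2))
      = -L := by
  have hn' : (0 : ℝ) < n := by exact_mod_cast hn
  set s1 := Real.sqrt (2 * L / n) with hs1def
  set s2 := Real.sqrt (n * L / 2) with hs2def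
  have hs1 : s1 ^ 2 = 2 * L / n := Real.sq_sqrt (by positivity)
  have hs12 : s1 * s2 = L := by
    rw [hs1def, hs2def, ← Real.sqrt_mul (by positivity)]
    have : 2 * L / ↑n * (↑n * L / 2) = L ^ 2 := by field_simp
    rw [this, Real.sqrt_sq hL.le]
  have e1 : (2 * s1 / ε) * ε ^ 2 / 2 = s1 * ε := by field_simp
  have e2 : (2 * s1 / ε) ^ 2 * ε ^ 2 / 8 = s1 ^ 2 / 2 := by field_simp; ring
  have e3 : (2 * s1 / ε) * (ε ^ 2 * n / 2 + ε * s2) = n * (s1 * ε) + 2 * (s1 * s2) := by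
    field_simp
  rw [e1, e2, e3, hs1, hs12]
  field_simp
  ring


end DPmi

open DPmi in
/-- for an ε-differentially private algorithm `A` and a dataset `S`
of `n` i.i.d. samples from `𝒫`, for any `β > 0`,
`I_∞^β(S; A(S)) ≤ (log₂ e) · (ε² n / 2 + ε √(n ln(2/β) / 2))`. -/
theorem approxMaxInfo_of_pure_dp_iid
    {X Y : Type*} [Fintype X] [Fintype Y] {n : ℕ}
    (P : PMF X) (A : (Fin n → X) → PMF Y) (ε : ℝ) (hA : DiffPrivate A ε)
    (β : ℝ) (hβ : 0 < β) :
    approxMaxInfoLe (iid P n) A β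
      (Real.logb 2 (Real.exp 1) *
        (ε ^ 2 * n / 2 + ε * Real.sqrt (n * Real.log (2 / β) / 2))) := by
  classical
  intro O hO
  rw [tsub_le_iff_right]
  set μ := iid P n with hμ
  set k := Real.logb 2 (Real.exp 1) *
    (ε ^ 2 * n / 2 + ε * Real.sqrt (n * Real.log (2 / β) / 2)) with hk
  -- trivial case β ≥ 1
  by_cases hβ1 : 1 ≤ β
  · calc pr (joint μ A) O ≤ 1 := pr_le_one _ _
      _ ≤ ENNReal.ofReal β := by
          rw [← ENNReal.ofReal_one]
          exact ENNReal.ofReal_le_ofReal hβ1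
      _ ≤ (2:ℝ≥0∞) ^ k * pr (indepProd μ A) O + ENNReal.ofReal β := le_add_self
  push_neg at hβ1
  have hXne : Nonempty X := by
    by_contra h
    rw [not_nonempty_iff] at h
    have := P.tsum_coe
    rw [ENNReal.tsum_eq_zero.2 (fun x => (h.false x).elim)] at this
    norm_num at this
  -- trivial case: n = 0 or ε = 0 (constant mechanism ⇒ joint = indep, k = 0)
  have htriv : ∀ (hconst : ∀ s s', A s = A s') (hk0 : k = 0),
      pr (joint μ A) O ≤ (2:ℝ≥0∞) ^ k * pr (indepProd μ A) O + ENNReal.ofReal β := by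
    intro hconst hk0
    have heq : joint μ A = indepProd μ A := joint_eq_indep_of_const μ A hconst
    rw [heq, hk0, ENNReal.rpow_zero, one_mul]
    exact le_add_right (le_refl _)
  rcases Nat.eq_zero_or_pos n with hn | hn
  · apply htriv
    · intro s s'
      subst hn
      have : s = s' := Subsingleton.elim _ _
      rw [this]
    · rw [hk]
      subst hn
      simp
  rcases lt_trichotomy ε 0 with hε | hε | hε
  · exact absurd (dp_neg_false hA hn hε hXne.some) not_false
  · apply htriv
    · intro s s'; exact dp_zero_const (hε ▸ hA) s s'
    · rw [hk, hε]; simp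
  -- MAIN CASE: ε > 0, n ≥ 1, 0 < β < 1
  set L := Real.log (2 / β) with hL
  have hL0 : 0 < L := Real.log_pos (by rw [lt_div_iff₀ hβ]; linarith)
  set lam := 2 * Real.sqrt (2 * L / n) / ε with hlam
  have hn' : (0:ℝ) < n := by exact_mod_cast hn
  have hlam0 : 0 < lam := by
    have h1 : 0 < Real.sqrt (2 * L / n) := Real.sqrt_pos.2 (by positivity)
    exact div_pos (by linarith) hε
  set t := ε ^ 2 * n / 2 + ε * Real.sqrt (n * L / 2) with ht
  have ht0 : 0 ≤ t := by
    have : (0:ℝ) ≤ Real.sqrt (n * L / 2) := Real.sqrt_nonneg _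
    have h2 : (0:ℝ) ≤ ε ^ 2 * n / 2 := by positivity
    have h3 := mul_nonneg hε.le this
    rw [ht]; linarith
  have hkt : k = Real.logb 2 (Real.exp 1) * t := by rw [hk, ht]
  -- 2 ^ k = ofReal (exp t)
  have hpow : (2:ℝ≥0∞) ^ k = ENNReal.ofReal (Real.exp t) := by
    rw [hkt]
    rw [show (2:ℝ≥0∞) = ENNReal.ofReal 2 by norm_num]
    rw [ENNReal.ofReal_rpow_of_pos (by norm_num)]
    congr 1
    rw [Real.rpow_mul (by norm_num)]
    rw [Real.rpow_logb (by norm_num) (by norm_num) (Real.exp_pos 1)]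
    exact Real.exp_one_rpow t
  -- the bad set
  set q := μ.bind A with hq
  set Bset : Set ((Fin n → X) × Y) :=
    {z | Real.exp t * pR q z.2 < pR (A z.1) z.2} with hB
  -- real Chernoff bound
  have hcher : ∑ z : (Fin n → X) × Y,
      Set.indicator Bset (fun z => pR μ z.1 * pR (A z.1) z.2) z ≤ β := by
    have hterm : ∀ z : (Fin n → X) × Y,
        Set.indicator Bset (fun z => pR μ z.1 * pR (A z.1) z.2) z
          ≤ Real.exp (-(lam * t))
            * (pR μ z.1 * pR (A z.1) z.2 * (pR (A z.1) z.2 / pR q z.2) ^ lam) := by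
      rintro ⟨s, y⟩
      have hRHS : 0 ≤ Real.exp (-(lam * t))
          * (pR μ s * pR (A s) y * (pR (A s) y / pR q y) ^ lam) :=
        mul_nonneg (Real.exp_pos _).le
          (mul_nonneg (mul_nonneg (pR_nonneg _ _) (pR_nonneg _ _))
            (Real.rpow_nonneg (div_nonneg (pR_nonneg _ _) (pR_nonneg _ _)) lam))
      by_cases hmem : (s, y) ∈ Bset
      swap
      · rw [Set.indicator_of_notMem hmem]
        exact hRHS
      rw [Set.indicator_of_mem hmem]
      show pR μ s * pR (A s) y ≤ Real.exp (-(lam * t))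
        * (pR μ s * pR (A s) y * (pR (A s) y / pR q y) ^ lam)
      have hBlt : Real.exp t * pR q y < pR (A s) y := hmem
      rcases eq_or_lt_of_le (mul_nonneg (pR_nonneg μ s) (pR_nonneg (A s) y)) with hz | hpos
      · linarith [hRHS]
      have hqpos : 0 < pR q y := by
        have hle : pR μ s * pR (A s) y ≤ pR q y := by
          rw [hq, bindR]
          exact Finset.single_le_sum
            (fun s' _ => mul_nonneg (pR_nonneg μ s') (pR_nonneg (A s') y))
            (Finset.mem_univ s)
        linarith
      have hr : Real.exp t < pR (A s) y / pR q y := (lt_div_iff₀ hqpos).2 hBlt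
      have hrp : Real.exp (t * lam) ≤ (pR (A s) y / pR q y) ^ lam := by
        have h1 : (Real.exp t : ℝ) ^ lam = Real.exp (t * lam) := by
          rw [Real.rpow_def_of_pos (Real.exp_pos t), Real.log_exp]
        rw [← h1]
        exact Real.rpow_le_rpow (Real.exp_pos t).le hr.le hlam0.le
      have hone : 1 ≤ Real.exp (-(lam * t)) * (pR (A s) y / pR q y) ^ lam := by
        calc (1:ℝ) = Real.exp (-(lam * t)) * Real.exp (t * lam) := by
              rw [← Real.exp_add]; simp [mul_comm]
          _ ≤ Real.exp (-(lam * t)) * (pR (A s) y / pR q y) ^ lam :=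
              mul_le_mul_of_nonneg_left hrp (Real.exp_pos _).le
      calc pR μ s * pR (A s) y = pR μ s * pR (A s) y * 1 := by ring
        _ ≤ pR μ s * pR (A s) y
            * (Real.exp (-(lam * t)) * (pR (A s) y / pR q y) ^ lam) :=
            mul_le_mul_of_nonneg_left hone hpos.le
        _ = Real.exp (-(lam * t))
            * (pR μ s * pR (A s) y * (pR (A s) y / pR q y) ^ lam) := by ring
    have hmgf := mgf_bound P hε hlam0.le n A hA
    calc ∑ z : (Fin n → X) × Y,
          Set.indicator Bset (fun z => pR μ z.1 * pR (A z.1) z.2) z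
        ≤ ∑ z : (Fin n → X) × Y, Real.exp (-(lam * t))
            * (pR μ z.1 * pR (A z.1) z.2 * (pR (A z.1) z.2 / pR q z.2) ^ lam) :=
          Finset.sum_le_sum fun z _ => hterm z
      _ = Real.exp (-(lam * t)) * ∑ z : (Fin n → X) × Y,
            pR μ z.1 * pR (A z.1) z.2 * (pR (A z.1) z.2 / pR q z.2) ^ lam := by
          rw [Finset.mul_sum]
      _ = Real.exp (-(lam * t)) * ∑ y : Y, ∑ s : Fin n → X,
            pR μ s * pR (A s) y * (pR (A s) y / pR q y) ^ lam := by
          congr 1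
          rw [Fintype.sum_prod_type]
          exact Finset.sum_comm
      _ ≤ Real.exp (-(lam * t))
            * Real.exp (n * (lam * ε ^ 2 / 2 + lam ^ 2 * ε ^ 2 / 8)) :=
          mul_le_mul_of_nonneg_left hmgf (Real.exp_pos _).le
      _ = Real.exp (n * (lam * ε ^ 2 / 2 + lam ^ 2 * ε ^ 2 / 8) - lam * t) := by
          rw [← Real.exp_add]; ring_nf
      _ = Real.exp (-L) := by
          congr 1
          rw [hlam, ht]
          exact arith hn hε hL0
      _ = β / 2 := by
          rw [hL, Real.exp_neg, Real.exp_log (by positivity), inv_div]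
      _ ≤ β := by linarith
  -- split pr into good and bad parts
  have hsplit : pr (joint μ A) O
      ≤ (∑ z : (Fin n → X) × Y,
          Set.indicator (O ∩ Bsetᶜ) (fun z => joint μ A z) z)
        + ∑ z : (Fin n → X) × Y, Set.indicator Bset (fun z => joint μ A z) z := by
    rw [pr_eq_sum, ← Finset.sum_add_distrib]
    apply Finset.sum_le_sum
    intro z _
    by_cases hzB : z ∈ Bset
    · by_cases hzO : z ∈ O
      · rw [Set.indicator_of_mem hzO, Set.indicator_of_mem hzB]
        exact le_add_self
      · rw [Set.indicator_of_notMem hzO]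
        exact zero_le
    · by_cases hzO : z ∈ O
      · rw [Set.indicator_of_mem hzO, Set.indicator_of_mem (Set.mem_inter hzO hzB)]
        exact le_add_right (le_refl _)
      · rw [Set.indicator_of_notMem hzO]
        exact zero_le
  -- good part
  have hgood : (∑ z : (Fin n → X) × Y,
        Set.indicator (O ∩ Bsetᶜ) (fun z => joint μ A z) z)
      ≤ ENNReal.ofReal (Real.exp t) * pr (indepProd μ A) O := by
    rw [pr_eq_sum, Finset.mul_sum]
    apply Finset.sum_le_sum
    rintro ⟨s, y⟩ _
    by_cases hz : (s, y) ∈ O ∩ Bsetᶜ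
    · rw [Set.indicator_of_mem hz, Set.indicator_of_mem hz.1]
      have hnB : ¬ ((s, y) ∈ Bset) := hz.2
      have hle : pR (A s) y ≤ Real.exp t * pR q y := by
        rw [hB] at hnB
        simpa using not_lt.1 hnB
      have hAle : (A s) y ≤ ENNReal.ofReal (Real.exp t) * q y := by
        calc (A s) y = ENNReal.ofReal (pR (A s) y) :=
              (ENNReal.ofReal_toReal ((A s).apply_ne_top y)).symm
          _ ≤ ENNReal.ofReal (Real.exp t * pR q y) := ENNReal.ofReal_le_ofReal hle
          _ = ENNReal.ofReal (Real.exp t) * ENNReal.ofReal (pR q y) :=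
              ENNReal.ofReal_mul (Real.exp_pos t).le
          _ = ENNReal.ofReal (Real.exp t) * q y := by
              simp only [pR]
              rw [ENNReal.ofReal_toReal (q.apply_ne_top y)]
      calc joint μ A (s, y) = μ s * (A s) y := joint_apply μ A s y
        _ ≤ μ s * (ENNReal.ofReal (Real.exp t) * q y) := mul_le_mul_right hAle (μ s)
        _ = ENNReal.ofReal (Real.exp t) * (μ s * q y) := by ring
        _ = ENNReal.ofReal (Real.exp t) * indepProd μ A (s, y) := by
            rw [indep_apply μ A s y, hq]
    · rw [Set.indicator_of_notMem hz]
      exact zero_le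
  -- bad part
  have hbad : (∑ z : (Fin n → X) × Y,
        Set.indicator Bset (fun z => joint μ A z) z) ≤ ENNReal.ofReal β := by
    have heq : ∀ z : (Fin n → X) × Y,
        Set.indicator Bset (fun z => joint μ A z) z
          = ENNReal.ofReal
            (Set.indicator Bset (fun z => pR μ z.1 * pR (A z.1) z.2) z) := by
      rintro ⟨s, y⟩
      by_cases hz : (s, y) ∈ Bset
      · rw [Set.indicator_of_mem hz, Set.indicator_of_mem hz]
        rw [joint_apply μ A s y]
        rw [← ENNReal.ofReal_toReal (ENNReal.mul_ne_top (μ.apply_ne_top s)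
          ((A s).apply_ne_top y))]
        rw [ENNReal.toReal_mul]
        rfl
      · rw [Set.indicator_of_notMem hz, Set.indicator_of_notMem hz]
        simp
    calc ∑ z : (Fin n → X) × Y, Set.indicator Bset (fun z => joint μ A z) z
        = ∑ z : (Fin n → X) × Y, ENNReal.ofReal
            (Set.indicator Bset (fun z => pR μ z.1 * pR (A z.1) z.2) z) :=
          Finset.sum_congr rfl fun z _ => heq z
      _ = ENNReal.ofReal (∑ z : (Fin n → X) × Y,
            Set.indicator Bset (fun z => pR μ z.1 * pR (A z.1) z.2) z) :=
          (ENNReal.ofReal_sum_of_nonneg fun z _ =>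
            Set.indicator_nonneg
              (fun z _ => mul_nonneg (pR_nonneg μ z.1) (pR_nonneg (A z.1) z.2)) z).symm
      _ ≤ ENNReal.ofReal β := ENNReal.ofReal_le_ofReal hcher
  calc pr (joint μ A) O
      ≤ _ + _ := hsplit
    _ ≤ ENNReal.ofReal (Real.exp t) * pr (indepProd μ A) O + ENNReal.ofReal β :=
        add_le_add hgood hbad
    _ = (2:ℝ≥0∞) ^ k * pr (indepProd μ A) O + ENNReal.ofReal β := by rw [hpow]
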